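/- Let R be a commutative ring, φ : 𝓘(R) → 𝓘(R) ∪ {∅} a function, and Q a φ-2-absorbing primary ideal of R such that φ(Q) is an ideal of R contained in Q. If (x, y, z) is a φ-2-primary triple of Q, then: (1) xyq ∈ φ(Q), yzq ∈ φ(Q) and xzq ∈ φ(Q) for every q ∈ Q; (2) x q q' ∈ φ(Q), y q q' ∈ φ(Q) and z q q' ∈ φ(Q) for all q, q' ∈ Q; and (3) q q' q'' ∈ φ(Q) for all q, q', q'' ∈ Q. -/

import Mathlib

open Finset

/-- A proper ideal `Q` is `φ`-`k`-absorbing if whenever a product of `k+1` elements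
lies in `Q \ φ Q`, the product of some `k` of them lies in `Q`. -/
def IsPhiKAbsorbing {R : Type*} [CommRing R] (φ : Ideal R → Set R) (k : ℕ)
    (Q : Ideal R) : Prop :=
  Q ≠ ⊤ ∧ ∀ r : Fin (k + 1) → R, (∏ i, r i) ∈ (Q : Set R) \ φ Q →
    ∃ j : Fin (k + 1), (∏ i ∈ univ.erase j, r i) ∈ Q

/-- A proper ideal `Q` is `k`-absorbing. -/
def IsKAbsorbing {R : Type*} [CommRing R] (k : ℕ) (Q : Ideal R) : Prop :=
  Q ≠ ⊤ ∧ ∀ r : Fin (k + 1) → R, (∏ i, r i) ∈ Q →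
    ∃ j : Fin (k + 1), (∏ i ∈ univ.erase j, r i) ∈ Q

/-- A proper ideal `Q` is `φ`-`k`-absorbing primary: whenever a product of `k+1`
elements `r 0, …, r k` lies in `Q \ φ Q`, either the product of the first `k` of them
lies in `Q`, or the product omitting some `r j` with `j ≠ Fin.last k` lies in `√Q`. -/
def IsPhiKAbsorbingPrimary {R : Type*} [CommRing R] (φ : Ideal R → Set R) (k : ℕ)
    (Q : Ideal R) : Prop :=
  Q ≠ ⊤ ∧ ∀ r : Fin (k + 1) → R, (∏ i, r i) ∈ (Q : Set R) \ φ Q →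
    (∏ i ∈ univ.erase (Fin.last k), r i) ∈ Q ∨
      ∃ j : Fin (k + 1), j ≠ Fin.last k ∧ (∏ i ∈ univ.erase j, r i) ∈ Q.radical

/-- A proper ideal `Q` is `k`-absorbing primary. -/
def IsKAbsorbingPrimary {R : Type*} [CommRing R] (k : ℕ) (Q : Ideal R) : Prop :=
  Q ≠ ⊤ ∧ ∀ r : Fin (k + 1) → R, (∏ i, r i) ∈ Q →
    (∏ i ∈ univ.erase (Fin.last k), r i) ∈ Q ∨
      ∃ j : Fin (k + 1), j ≠ Fin.last k ∧ (∏ i ∈ univ.erase j, r i) ∈ Q.radical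

/-- A proper ideal `Q` is weakly `k`-absorbing primary. -/
def IsWeaklyKAbsorbingPrimary {R : Type*} [CommRing R] (k : ℕ) (Q : Ideal R) : Prop :=
  Q ≠ ⊤ ∧ ∀ r : Fin (k + 1) → R, (∏ i, r i) ≠ 0 → (∏ i, r i) ∈ Q →
    (∏ i ∈ univ.erase (Fin.last k), r i) ∈ Q ∨
      ∃ j : Fin (k + 1), j ≠ Fin.last k ∧ (∏ i ∈ univ.erase j, r i) ∈ Q.radical

/-- `φ` is a reduction function on the ideals of `R`. -/
def IsReductionFunction {R : Type*} [CommRing R] (φ : Ideal R → Set R) : Prop :=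
  (∀ P : Ideal R, φ P ⊆ (P : Set R)) ∧ ∀ P Q : Ideal R, P ≤ Q → φ P ⊆ φ Q

lemma key {R : Type*} [CommRing R] {φ : Ideal R → Set R} {Q : Ideal R}
    (hQ : IsPhiKAbsorbingPrimary φ 2 Q) {a b c : R} (h1 : a * b * c ∈ Q)
    (h2 : a * b * c ∉ φ Q) : a * b ∈ Q ∨ b * c ∈ Q.radical ∨ a * c ∈ Q.radical := by
  have e0 : (univ.erase (Fin.last 2)) = ({0, 1} : Finset (Fin 3)) := by decide
  have e1 : (univ.erase (0 : Fin 3)) = ({1, 2} : Finset (Fin 3)) := by decide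
  have e2 : (univ.erase (1 : Fin 3)) = ({0, 2} : Finset (Fin 3)) := by decide
  have := hQ.2 ![a, b, c] (by
    constructor
    · simpa [Fin.prod_univ_three] using h1
    · simpa [Fin.prod_univ_three] using h2)
  rcases this with h | ⟨j, hj, hmem⟩
  · left; rw [e0] at h; simpa using h
  · fin_cases j
    · right; left; simpa [e1] using hmem
    · right; right; simpa [e2] using hmem
    · exact absurd rfl hj

theorem stmt13 {R : Type*} [CommRing R] (φ : Ideal R → Set R)
    (Q J : Ideal R) (hJ : φ Q = (J : Set R)) (hJQ : J ≤ Q)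
    (hQ : IsPhiKAbsorbingPrimary φ 2 Q) (x y z : R)
    (htriple : x * y * z ∈ φ Q ∧ x * y ∉ Q ∧ y * z ∉ Q.radical ∧ x * z ∉ Q.radical) :
    (∀ q ∈ Q, x * y * q ∈ φ Q ∧ y * z * q ∈ φ Q ∧ x * z * q ∈ φ Q) ∧
    (∀ q ∈ Q, ∀ q' ∈ Q, x * q * q' ∈ φ Q ∧ y * q * q' ∈ φ Q ∧ z * q * q' ∈ φ Q) ∧
    (∀ q ∈ Q, ∀ q' ∈ Q, ∀ q'' ∈ Q, q * q' * q'' ∈ φ Q) := by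
  obtain ⟨hxyz, hxy, hyz, hxz⟩ := htriple
  have hmemJ : ∀ a : R, a ∈ φ Q ↔ a ∈ J := fun a => by rw [hJ]; rfl
  have hxyzJ : x * y * z ∈ J := (hmemJ _).1 hxyz
  have hrad : ∀ a ∈ Q, a ∈ Q.radical := fun a ha => Ideal.le_radical ha
  -- Part 1
  have part1 : ∀ q ∈ Q, x * y * q ∈ φ Q ∧ y * z * q ∈ φ Q ∧ x * z * q ∈ φ Q := by
    intro q hq
    refine ⟨?_, ?_, ?_⟩
    · by_contra hcon
      have hnot : x * y * (z + q) ∉ φ Q := fun h => by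
        have : x * y * q ∈ J := by
          have := J.sub_mem ((hmemJ _).1 h) hxyzJ
          have e : x * y * (z + q) - x * y * z = x * y * q := by ring
          rwa [e] at this
        exact hcon ((hmemJ _).2 this)
      have hin : x * y * (z + q) ∈ Q := by
        have : x * y * (z + q) = x * y * z + x * y * q := by ring
        rw [this]; exact Q.add_mem (hJQ hxyzJ) (Q.mul_mem_left _ hq)
      rcases key hQ hin hnot with h | h | h
      · exact hxy h
      · apply hyz
        have : y * z = y * (z + q) - y * q := by ring
        rw [this]; exact Q.radical.sub_mem h (hrad _ (Q.mul_mem_left _ hq))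
      · apply hxz
        have : x * z = x * (z + q) - x * q := by ring
        rw [this]; exact Q.radical.sub_mem h (hrad _ (Q.mul_mem_left _ hq))
    · by_contra hcon
      have hnot : (x + q) * y * z ∉ φ Q := fun h => by
        have : y * z * q ∈ J := by
          have := J.sub_mem ((hmemJ _).1 h) hxyzJ
          have e : (x + q) * y * z - x * y * z = y * z * q := by ring
          rwa [e] at this
        exact hcon ((hmemJ _).2 this)
      have hin : (x + q) * y * z ∈ Q := by
        have : (x + q) * y * z = x * y * z + y * z * q := by ring
        rw [this]; exact Q.add_mem (hJQ hxyzJ) (Q.mul_mem_left _ hq)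
      rcases key hQ hin hnot with h | h | h
      · apply hxy
        have : x * y = (x + q) * y - y * q := by ring
        rw [this]; exact Q.sub_mem h (Q.mul_mem_left _ hq)
      · exact hyz h
      · apply hxz
        have : x * z = (x + q) * z - z * q := by ring
        rw [this]; exact Q.radical.sub_mem h (hrad _ (Q.mul_mem_left _ hq))
    · by_contra hcon
      have hnot : x * (y + q) * z ∉ φ Q := fun h => by
        have : x * z * q ∈ J := by
          have := J.sub_mem ((hmemJ _).1 h) hxyzJ
          have e : x * (y + q) * z - x * y * z = x * z * q := by ring
          rwa [e] at this
        exact hcon ((hmemJ _).2 this)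
      have hin : x * (y + q) * z ∈ Q := by
        have : x * (y + q) * z = x * y * z + x * z * q := by ring
        rw [this]; exact Q.add_mem (hJQ hxyzJ) (Q.mul_mem_left _ hq)
      rcases key hQ hin hnot with h | h | h
      · apply hxy
        have : x * y = x * (y + q) - x * q := by ring
        rw [this]; exact Q.sub_mem h (Q.mul_mem_left _ hq)
      · apply hyz
        have : y * z = (y + q) * z - z * q := by ring
        rw [this]; exact Q.radical.sub_mem h (hrad _ (Q.mul_mem_left _ hq))
      · exact hxz h
  -- Part 2
  have part2 : ∀ q ∈ Q, ∀ q' ∈ Q,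
      x * q * q' ∈ φ Q ∧ y * q * q' ∈ φ Q ∧ z * q * q' ∈ φ Q := by
    intro q hq q' hq'
    have hxyq' : x * y * q' ∈ J := (hmemJ _).1 (part1 q' hq').1
    have hxzq : x * z * q ∈ J := (hmemJ _).1 (part1 q hq).2.2
    have hyzq : y * z * q ∈ J := (hmemJ _).1 (part1 q hq).2.1
    have hxzq' : x * z * q' ∈ J := (hmemJ _).1 (part1 q' hq').2.2
    refine ⟨?_, ?_, ?_⟩
    · by_contra hcon
      have hrest : x * y * z + x * y * q' + x * z * q ∈ J :=
        J.add_mem (J.add_mem hxyzJ hxyq') hxzq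
      have hnot : x * (y + q) * (z + q') ∉ φ Q := fun h => by
        have : x * q * q' ∈ J := by
          have := J.sub_mem ((hmemJ _).1 h) hrest
          have e : x * (y + q) * (z + q') - (x * y * z + x * y * q' + x * z * q)
              = x * q * q' := by ring
          rwa [e] at this
        exact hcon ((hmemJ _).2 this)
      have hin : x * (y + q) * (z + q') ∈ Q := by
        have : x * (y + q) * (z + q')
            = (x * y * z + x * y * q' + x * z * q) + x * q * q' := by ring
        rw [this]
        exact Q.add_mem (hJQ hrest) (Q.mul_mem_right _ (Q.mul_mem_left _ hq))
      rcases key hQ hin hnot with h | h | h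
      · apply hxy
        have : x * y = x * (y + q) - x * q := by ring
        rw [this]; exact Q.sub_mem h (Q.mul_mem_left _ hq)
      · apply hyz
        have : y * z = (y + q) * (z + q') - (y * q' + z * q + q * q') := by ring
        rw [this]
        exact Q.radical.sub_mem h (hrad _ (Q.add_mem (Q.add_mem
          (Q.mul_mem_left _ hq') (Q.mul_mem_left _ hq)) (Q.mul_mem_left _ hq')))
      · apply hxz
        have : x * z = x * (z + q') - x * q' := by ring
        rw [this]; exact Q.radical.sub_mem h (hrad _ (Q.mul_mem_left _ hq'))
    · by_contra hcon
      have hrest : x * y * z + x * y * q' + y * z * q ∈ J :=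
        J.add_mem (J.add_mem hxyzJ hxyq') hyzq
      have hnot : (x + q) * y * (z + q') ∉ φ Q := fun h => by
        have : y * q * q' ∈ J := by
          have := J.sub_mem ((hmemJ _).1 h) hrest
          have e : (x + q) * y * (z + q') - (x * y * z + x * y * q' + y * z * q)
              = y * q * q' := by ring
          rwa [e] at this
        exact hcon ((hmemJ _).2 this)
      have hin : (x + q) * y * (z + q') ∈ Q := by
        have : (x + q) * y * (z + q')
            = (x * y * z + x * y * q' + y * z * q) + y * q * q' := by ring
        rw [this]
        exact Q.add_mem (hJQ hrest) (Q.mul_mem_right _ (Q.mul_mem_left _ hq))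
      rcases key hQ hin hnot with h | h | h
      · apply hxy
        have : x * y = (x + q) * y - y * q := by ring
        rw [this]; exact Q.sub_mem h (Q.mul_mem_left _ hq)
      · apply hyz
        have : y * z = y * (z + q') - y * q' := by ring
        rw [this]; exact Q.radical.sub_mem h (hrad _ (Q.mul_mem_left _ hq'))
      · apply hxz
        have : x * z = (x + q) * (z + q') - (x * q' + z * q + q * q') := by ring
        rw [this]
        exact Q.radical.sub_mem h (hrad _ (Q.add_mem (Q.add_mem
          (Q.mul_mem_left _ hq') (Q.mul_mem_left _ hq)) (Q.mul_mem_left _ hq')))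
    · by_contra hcon
      have hrest : x * y * z + x * z * q' + y * z * q ∈ J :=
        J.add_mem (J.add_mem hxyzJ hxzq') hyzq
      have hnot : (x + q) * (y + q') * z ∉ φ Q := fun h => by
        have : z * q * q' ∈ J := by
          have := J.sub_mem ((hmemJ _).1 h) hrest
          have e : (x + q) * (y + q') * z - (x * y * z + x * z * q' + y * z * q)
              = z * q * q' := by ring
          rwa [e] at this
        exact hcon ((hmemJ _).2 this)
      have hin : (x + q) * (y + q') * z ∈ Q := by
        have : (x + q) * (y + q') * z
            = (x * y * z + x * z * q' + y * z * q) + z * q * q' := by ring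
        rw [this]
        exact Q.add_mem (hJQ hrest) (Q.mul_mem_right _ (Q.mul_mem_left _ hq))
      rcases key hQ hin hnot with h | h | h
      · apply hxy
        have : x * y = (x + q) * (y + q') - (x * q' + y * q + q * q') := by ring
        rw [this]
        exact Q.sub_mem h (Q.add_mem (Q.add_mem
          (Q.mul_mem_left _ hq') (Q.mul_mem_left _ hq)) (Q.mul_mem_left _ hq'))
      · apply hyz
        have : y * z = (y + q') * z - z * q' := by ring
        rw [this]; exact Q.radical.sub_mem h (hrad _ (Q.mul_mem_left _ hq'))
      · apply hxz
        have : x * z = (x + q) * z - z * q := by ring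
        rw [this]; exact Q.radical.sub_mem h (hrad _ (Q.mul_mem_left _ hq))
  refine ⟨part1, part2, ?_⟩
  -- Part 3
  intro q hq q' hq' q'' hq''
  by_contra hcon
  have hrest : x * y * z + x * y * q'' + x * z * q' + y * z * q
      + x * q' * q'' + y * q * q'' + z * q * q' ∈ J := by
    refine J.add_mem (J.add_mem (J.add_mem (J.add_mem (J.add_mem (J.add_mem
      ?_ ?_) ?_) ?_) ?_) ?_) ?_
    · exact hxyzJ
    · exact (hmemJ _).1 (part1 q'' hq'').1
    · exact (hmemJ _).1 (part1 q' hq').2.2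
    · exact (hmemJ _).1 (part1 q hq).2.1
    · exact (hmemJ _).1 (part2 q' hq' q'' hq'').1
    · exact (hmemJ _).1 (part2 q hq q'' hq'').2.1
    · exact (hmemJ _).1 (part2 q hq q' hq').2.2
  have hnot : (x + q) * (y + q') * (z + q'') ∉ φ Q := fun h => by
    have : q * q' * q'' ∈ J := by
      have := J.sub_mem ((hmemJ _).1 h) hrest
      have e : (x + q) * (y + q') * (z + q'') - (x * y * z + x * y * q'' + x * z * q'
          + y * z * q + x * q' * q'' + y * q * q'' + z * q * q') = q * q' * q'' := by ring
      rwa [e] at this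
    exact hcon ((hmemJ _).2 this)
  have hin : (x + q) * (y + q') * (z + q'') ∈ Q := by
    have : (x + q) * (y + q') * (z + q'') = (x * y * z + x * y * q'' + x * z * q'
        + y * z * q + x * q' * q'' + y * q * q'' + z * q * q') + q * q' * q'' := by ring
    rw [this]
    exact Q.add_mem (hJQ hrest) (Q.mul_mem_right _ (Q.mul_mem_right _ hq))
  rcases key hQ hin hnot with h | h | h
  · apply hxy
    have : x * y = (x + q) * (y + q') - (x * q' + y * q + q * q') := by ring
    rw [this]
    exact Q.sub_mem h (Q.add_mem (Q.add_mem
      (Q.mul_mem_left _ hq') (Q.mul_mem_left _ hq)) (Q.mul_mem_left _ hq'))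
  · apply hyz
    have : y * z = (y + q') * (z + q'') - (y * q'' + z * q' + q' * q'') := by ring
    rw [this]
    exact Q.radical.sub_mem h (hrad _ (Q.add_mem (Q.add_mem
      (Q.mul_mem_left _ hq'') (Q.mul_mem_left _ hq')) (Q.mul_mem_left _ hq'')))
  · apply hxz
    have : x * z = (x + q) * (z + q'') - (x * q'' + z * q + q * q'') := by ring
    rw [this]
    exact Q.radical.sub_mem h (hrad _ (Q.add_mem (Q.add_mem
      (Q.mul_mem_left _ hq'') (Q.mul_mem_left _ hq)) (Q.mul_mem_left _ hq'')))
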